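/- Let A be a finite set with |A| = n, let 0 ≤ j ≤ k ≤ n, and let g: {j-element subsets of A} → [0,∞) and h: {(k−j)-element subsets of A} → [0,∞). Define p(J) = Σ_{I ⊆ J, |I|=j} g(I)·h(J∖I) for each k-element subset J of A. Then (1/C(n,k)) Σ_{|J|=k} (p(J)/C(k,j))² ≤ ((1/C(n,j)) Σ_{|I|=j} g(I)²) · ((1/C(n,k−j)) Σ_{|J|=k−j} h(J)²). -/

import Mathlib

open Real Finset

lemma two_mul_le_add (x y t : ℝ) (hx : 0 ≤ x) (hy : 0 ≤ y) (ht : 0 ≤ t)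
    (h : x * y = t ^ 2) : 2 * t ≤ x + y := by
  nlinarith [sq_nonneg (x - y), hx, hy, ht, h]

set_option maxHeartbeats 1000000 in
lemma key_arith (rn rj rk a0 a1 b0 b1 c0 c1 d0 d1 a b c d S P Q X G0 G1 H0 H1 : ℝ)
    (hj : 0 < rj) (hjk : rj < rk) (hkn : rk ≤ rn)
    (ha1 : 0 < a1) (hb0 : 0 < b0) (hb1 : 0 < b1)
    (hc1 : 0 < c1) (hd0 : 0 < d0) (hd1 : 0 < d1)
    (ha0 : 0 < a0) (hc0 : 0 ≤ c0)
    (pa : a = a0 + a1) (pb : b = b0 + b1) (pc' : c = c0 + c1) (pd : d = d0 + d1)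
    (ra : rn * a1 = rj * a) (rb : rn * b1 = (rk - rj) * b)
    (rc : rn * c1 = rk * c) (rd : rk * d1 = rj * d)
    (hS : 0 ≤ S) (hP : 0 ≤ P) (hQ : 0 ≤ Q) (hX : 0 ≤ X) (hX2 : X ^ 2 ≤ P * Q)
    (hG0 : 0 ≤ G0) (hG1 : 0 ≤ G1) (hH0 : 0 ≤ H0) (hH1 : 0 ≤ H1)
    (E1 : a0 * b0 * S ≤ c0 * d ^ 2 * (G0 * H0))
    (E2 : a1 * b0 * P ≤ c1 * d1 ^ 2 * (G1 * H0))
    (E3 : a0 * b1 * Q ≤ c1 * d0 ^ 2 * (G0 * H1)) :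
    a * b * (S + (P + Q + 2 * X)) ≤ c * d ^ 2 * ((G0 + G1) * (H0 + H1)) := by
  have hn : 0 < rn := lt_of_lt_of_le (hj.trans hjk) hkn
  have hk : 0 < rk := hj.trans hjk
  have hkj : 0 < rk - rj := by linarith
  have hnj : 0 < rn - rj := by linarith
  have hnk : 0 ≤ rn - rk := by linarith
  have hnkj : 0 < rn - rk + rj := by linarith
  have ha : 0 < a := by rw [pa]; linarith
  have hb : 0 < b := by rw [pb]; linarith
  have hc : 0 < c := by rw [pc']; linarith
  have hd : 0 < d := by rw [pd]; linarith
  have ha0' : rn * a0 = (rn - rj) * a := by linear_combination (-rn) * pa - ra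
  have hb0' : rn * b0 = (rn - rk + rj) * b := by linear_combination (-rn) * pb - rb
  have hc0' : rn * c0 = (rn - rk) * c := by linear_combination (-rn) * pc' - rc
  have hd0' : rk * d0 = (rk - rj) * d := by linear_combination (-rk) * pd - rd
  -- W1
  have t1 : (rn * rn * rk) * (a0 * b0 * S) ≤ (rn * rn * rk) * (c0 * d ^ 2 * (G0 * H0)) :=
    mul_le_mul_of_nonneg_left E1 (by positivity)
  have e1 : rk * ((rn - rj) * ((rn - rk + rj) * (a * b * S))) = (rn * rn * rk) * (a0 * b0 * S) := by
    linear_combination (-(rk * S * rn * b0)) * ha0' + (-(rk * S * (rn - rj) * a)) * hb0'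
  have e2 : (rn * rn * rk) * (c0 * d ^ 2 * (G0 * H0))
      = rk * (rn * ((rn - rk) * (c * d ^ 2 * (G0 * H0)))) := by
    linear_combination (rn * rk * d ^ 2 * (G0 * H0)) * hc0'
  have W1 : rk * ((rn - rj) * ((rn - rk + rj) * (a * b * S)))
      ≤ rk * (rn * ((rn - rk) * (c * d ^ 2 * (G0 * H0)))) := by
    rw [e1, ← e2]; exact t1
  -- W2
  have t2 : (rn * rn * (rk * rk * (rn - rj))) * (a1 * b0 * P)
      ≤ (rn * rn * (rk * rk * (rn - rj))) * (c1 * d1 ^ 2 * (G1 * H0)) :=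
    mul_le_mul_of_nonneg_left E2 (by positivity)
  have e3 : (rn * rn * (rk * rk * (rn - rj))) * (a1 * b0 * P)
      = (rj * rk) * (rk * ((rn - rj) * ((rn - rk + rj) * (a * b * P)))) := by
    linear_combination (rk * rk * (rn - rj) * P * rn * b0) * ra
      + (rk * rk * (rn - rj) * P * rj * a) * hb0'
  have e4 : (rn * rn * (rk * rk * (rn - rj))) * (c1 * d1 ^ 2 * (G1 * H0))
      = (rj * rk) * (rn * (rj * ((rn - rj) * (c * d ^ 2 * (G1 * H0))))) := by
    linear_combination ((rn - rj) * (G1 * H0) * rn * rk ^ 2 * d1 ^ 2) * rc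
      + (rn * (rn - rj) * (G1 * H0) * rk * c * (rk * d1 + rj * d)) * rd
  have W2 : rk * ((rn - rj) * ((rn - rk + rj) * (a * b * P)))
      ≤ rn * (rj * ((rn - rj) * (c * d ^ 2 * (G1 * H0)))) := by
    rw [e3, e4] at t2
    exact le_of_mul_le_mul_left t2 (by positivity)
  -- W3
  have t3 : (rn * rn * (rk * rk * (rn - rk + rj))) * (a0 * b1 * Q)
      ≤ (rn * rn * (rk * rk * (rn - rk + rj))) * (c1 * d0 ^ 2 * (G0 * H1)) :=
    mul_le_mul_of_nonneg_left E3 (by positivity)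
  have e5 : (rn * rn * (rk * rk * (rn - rk + rj))) * (a0 * b1 * Q)
      = ((rk - rj) * rk) * (rk * ((rn - rj) * ((rn - rk + rj) * (a * b * Q)))) := by
    linear_combination (rk * rk * (rn - rk + rj) * Q * rn * b1) * ha0'
      + (rk * rk * (rn - rk + rj) * Q * (rn - rj) * a) * rb
  have e6 : (rn * rn * (rk * rk * (rn - rk + rj))) * (c1 * d0 ^ 2 * (G0 * H1))
      = ((rk - rj) * rk) * (rn * ((rk - rj) * ((rn - rk + rj) * (c * d ^ 2 * (G0 * H1))))) := by
    linear_combination ((rn - rk + rj) * (G0 * H1) * rn * rk ^ 2 * d0 ^ 2) * rc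
      + (rn * (rn - rk + rj) * (G0 * H1) * rk * c * (rk * d0 + (rk - rj) * d)) * hd0'
  have W3 : rk * ((rn - rj) * ((rn - rk + rj) * (a * b * Q)))
      ≤ rn * ((rk - rj) * ((rn - rk + rj) * (c * d ^ 2 * (G0 * H1)))) := by
    rw [e5, e6] at t3
    exact le_of_mul_le_mul_left t3 (by positivity)
  -- sqrt quantity
  set E : ℝ := rj * ((rk - rj) * ((rn - rj) * ((rn - rk + rj) * (G0 * (H0 * (G1 * H1)))))) with hE
  have hEnn : 0 ≤ E := by rw [hE]; positivity
  set s : ℝ := Real.sqrt E with hsdef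
  have hs0 : 0 ≤ s := Real.sqrt_nonneg E
  have hs2 : s ^ 2 = E := Real.sq_sqrt hEnn
  -- X bound
  have hLnn : 0 ≤ rk * ((rn - rj) * ((rn - rk + rj) * (a * b * X))) := by positivity
  have hRnn : 0 ≤ c * d ^ 2 * (rn * s) := by positivity
  have m1 : (rk * ((rn - rj) * ((rn - rk + rj) * (a * b * P))))
      * (rk * ((rn - rj) * ((rn - rk + rj) * (a * b * Q))))
      ≤ (rn * (rj * ((rn - rj) * (c * d ^ 2 * (G1 * H0)))))
      * (rn * ((rk - rj) * ((rn - rk + rj) * (c * d ^ 2 * (G0 * H1))))) :=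
    mul_le_mul W2 W3 (by positivity) (by positivity)
  have m2 : (rk * ((rn - rj) * ((rn - rk + rj) * (a * b * X)))) ^ 2
      ≤ (rk * ((rn - rj) * ((rn - rk + rj) * (a * b * P))))
      * (rk * ((rn - rj) * ((rn - rk + rj) * (a * b * Q)))) := by
    have h := mul_le_mul_of_nonneg_left hX2
      (sq_nonneg (rk * ((rn - rj) * ((rn - rk + rj) * (a * b)))))
    calc (rk * ((rn - rj) * ((rn - rk + rj) * (a * b * X)))) ^ 2
        = (rk * ((rn - rj) * ((rn - rk + rj) * (a * b)))) ^ 2 * X ^ 2 := by ring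
      _ ≤ (rk * ((rn - rj) * ((rn - rk + rj) * (a * b)))) ^ 2 * (P * Q) := h
      _ = _ := by ring
  have m3 : (rn * (rj * ((rn - rj) * (c * d ^ 2 * (G1 * H0)))))
      * (rn * ((rk - rj) * ((rn - rk + rj) * (c * d ^ 2 * (G0 * H1)))))
      = (c * d ^ 2 * (rn * s)) ^ 2 := by
    calc _ = (c * d ^ 2) ^ 2 * rn ^ 2
          * (rj * ((rk - rj) * ((rn - rj) * ((rn - rk + rj) * (G0 * (H0 * (G1 * H1))))))) := by
          ring
      _ = (c * d ^ 2) ^ 2 * rn ^ 2 * s ^ 2 := by rw [hs2, hE]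
      _ = _ := by ring
  have hsq : (rk * ((rn - rj) * ((rn - rk + rj) * (a * b * X)))) ^ 2
      ≤ (c * d ^ 2 * (rn * s)) ^ 2 := by
    calc _ ≤ _ := m2
      _ ≤ _ := m1
      _ = _ := m3
  have Xbd : rk * ((rn - rj) * ((rn - rk + rj) * (a * b * X))) ≤ c * d ^ 2 * (rn * s) := by
    rw [← Real.sqrt_sq hLnn, ← Real.sqrt_sq hRnn]
    exact Real.sqrt_le_sqrt hsq
  -- AM-GM parts
  have hA14 : (rk * (rj * ((rk - rj) * (G0 * H0))))
      * (rk * ((rn - rj) * ((rn - rk + rj) * (G1 * H1)))) = (rk * s) ^ 2 := by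
    rw [mul_pow, hs2, hE]; ring
  have hA23 : ((rn - rj) * ((rn - rk) * ((rk - rj) * (G1 * H0))))
      * (rj * ((rn - rk) * ((rn - rk + rj) * (G0 * H1)))) = ((rn - rk) * s) ^ 2 := by
    rw [mul_pow, hs2, hE]; ring
  have am1 : 2 * (rk * s) ≤ rk * (rj * ((rk - rj) * (G0 * H0)))
      + rk * ((rn - rj) * ((rn - rk + rj) * (G1 * H1))) :=
    two_mul_le_add _ _ _ (by positivity) (by positivity) (by positivity) hA14
  have am2 : 2 * ((rn - rk) * s) ≤ (rn - rj) * ((rn - rk) * ((rk - rj) * (G1 * H0)))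
      + rj * ((rn - rk) * ((rn - rk + rj) * (G0 * H1))) :=
    two_mul_le_add _ _ _ (by positivity) (by positivity) (mul_nonneg hnk hs0) hA23
  have hM : (0:ℝ) ≤ c * d ^ 2 := by positivity
  have am1' := mul_le_mul_of_nonneg_left am1 hM
  have am2' := mul_le_mul_of_nonneg_left am2 hM
  have hD : (0:ℝ) < rk * ((rn - rj) * (rn - rk + rj)) := by positivity
  have final : (rk * ((rn - rj) * (rn - rk + rj))) * (a * b * (S + (P + Q + 2 * X)))
      ≤ (rk * ((rn - rj) * (rn - rk + rj))) * (c * d ^ 2 * ((G0 + G1) * (H0 + H1))) := by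
    calc (rk * ((rn - rj) * (rn - rk + rj))) * (a * b * (S + (P + Q + 2 * X)))
        = rk * ((rn - rj) * ((rn - rk + rj) * (a * b * S)))
          + rk * ((rn - rj) * ((rn - rk + rj) * (a * b * P)))
          + rk * ((rn - rj) * ((rn - rk + rj) * (a * b * Q)))
          + 2 * (rk * ((rn - rj) * ((rn - rk + rj) * (a * b * X)))) := by ring
      _ ≤ rk * (rn * ((rn - rk) * (c * d ^ 2 * (G0 * H0))))
          + rn * (rj * ((rn - rj) * (c * d ^ 2 * (G1 * H0))))
          + rn * ((rk - rj) * ((rn - rk + rj) * (c * d ^ 2 * (G0 * H1))))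
          + 2 * (c * d ^ 2 * (rn * s)) := by
            have hX2' : 2 * (rk * ((rn - rj) * ((rn - rk + rj) * (a * b * X))))
                ≤ 2 * (c * d ^ 2 * (rn * s)) := by linarith [Xbd]
            exact add_le_add (add_le_add (add_le_add W1 W2) W3) hX2'
      _ = rk * (rn * ((rn - rk) * (c * d ^ 2 * (G0 * H0))))
          + rn * (rj * ((rn - rj) * (c * d ^ 2 * (G1 * H0))))
          + rn * ((rk - rj) * ((rn - rk + rj) * (c * d ^ 2 * (G0 * H1))))
          + ((c * d ^ 2) * (2 * (rk * s)) + (c * d ^ 2) * (2 * ((rn - rk) * s))) := by ring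
      _ ≤ rk * (rn * ((rn - rk) * (c * d ^ 2 * (G0 * H0))))
          + rn * (rj * ((rn - rj) * (c * d ^ 2 * (G1 * H0))))
          + rn * ((rk - rj) * ((rn - rk + rj) * (c * d ^ 2 * (G0 * H1))))
          + ((c * d ^ 2) * (rk * (rj * ((rk - rj) * (G0 * H0)))
              + rk * ((rn - rj) * ((rn - rk + rj) * (G1 * H1))))
            + (c * d ^ 2) * ((rn - rj) * ((rn - rk) * ((rk - rj) * (G1 * H0)))
              + rj * ((rn - rk) * ((rn - rk + rj) * (G0 * H1))))) := by
            exact add_le_add_right (add_le_add am1' am2') _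
      _ = (rk * ((rn - rj) * (rn - rk + rj))) * (c * d ^ 2 * ((G0 + G1) * (H0 + H1))) := by
            ring
  exact le_of_mul_le_mul_left final hD

lemma sum_powersetCard_insert {α : Type*} [DecidableEq α] {x : α} {B : Finset α}
    (hx : x ∉ B) (r : ℕ) (f : Finset α → ℝ) :
    ∑ S ∈ (insert x B).powersetCard (r + 1), f S
      = (∑ S ∈ B.powersetCard (r + 1), f S) + ∑ S ∈ B.powersetCard r, f (insert x S) := by
  have hdisj : Disjoint (B.powersetCard (r + 1)) ((B.powersetCard r).image (insert x)) := by
    rw [Finset.disjoint_left]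
    intro S hS hS'
    obtain ⟨T, hT, rfl⟩ := Finset.mem_image.1 hS'
    exact hx ((Finset.mem_powersetCard.1 hS).1 (Finset.mem_insert_self x T))
  have hinj : ∀ S ∈ B.powersetCard r, ∀ T ∈ B.powersetCard r,
      insert x S = insert x T → S = T := by
    intro S hS T hT hST
    have hxS : x ∉ S := fun hc => hx ((Finset.mem_powersetCard.1 hS).1 hc)
    have hxT : x ∉ T := fun hc => hx ((Finset.mem_powersetCard.1 hT).1 hc)
    rw [← Finset.erase_insert hxS, ← Finset.erase_insert hxT, hST]
  rw [Finset.powersetCard_succ_insert hx, Finset.sum_union hdisj, Finset.sum_image hinj]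

lemma main_ineq {α : Type*} [DecidableEq α] :
    ∀ (n : ℕ) (A : Finset α), A.card = n → ∀ (j k : ℕ) (g h : Finset α → ℝ),
    (∀ I ∈ A.powersetCard j, 0 ≤ g I) → (∀ K ∈ A.powersetCard (k - j), 0 ≤ h K) →
    (n.choose j : ℝ) * (n.choose (k - j)) *
        ∑ J ∈ A.powersetCard k, (∑ I ∈ J.powersetCard j, g I * h (J \ I)) ^ 2
      ≤ (n.choose k : ℝ) * (k.choose j) ^ 2 *
        ((∑ I ∈ A.powersetCard j, g I ^ 2) * ∑ K ∈ A.powersetCard (k - j), h K ^ 2) := by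
  intro n
  induction n using Nat.strong_induction_on with
  | _ n ih =>
  intro A hA j k g h hg hh
  cases j with
  | zero =>
      simp only [Nat.choose_zero_right, Nat.cast_one, one_mul, Nat.sub_zero,
        Finset.powersetCard_zero, Finset.sum_singleton, Finset.sdiff_empty, one_pow, mul_pow]
      rw [← Finset.mul_sum]
      exact le_of_eq (by ring)
  | succ j' =>
  rcases lt_or_ge k (j' + 1) with hkj | hjk1
  · -- k < j : both sides vanish
    have hz : ∀ J ∈ A.powersetCard k,
        (∑ I ∈ J.powersetCard (j' + 1), g I * h (J \ I)) ^ 2 = 0 := by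
      intro J hJ
      have he : J.powersetCard (j' + 1) = ∅ :=
        Finset.powersetCard_eq_empty.2 (by rw [(Finset.mem_powersetCard.1 hJ).2]; exact hkj)
      rw [he, Finset.sum_empty]
      norm_num
    rw [Finset.sum_eq_zero hz, Nat.choose_eq_zero_of_lt hkj]
    simp
  rcases eq_or_lt_of_le hjk1 with hkj | hjk2
  · -- k = j : equality case
    subst hkj
    have inner : ∀ J ∈ A.powersetCard (j' + 1),
        (∑ I ∈ J.powersetCard (j' + 1), g I * h (J \ I)) ^ 2 = g J ^ 2 * h ∅ ^ 2 := by
      intro J hJ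
      have hc : J.card = j' + 1 := (Finset.mem_powersetCard.1 hJ).2
      rw [← hc, Finset.powersetCard_self, Finset.sum_singleton, Finset.sdiff_self]
      ring
    rw [Finset.sum_congr rfl inner]
    simp only [Nat.sub_self, Finset.powersetCard_zero, Finset.sum_singleton,
      Nat.choose_zero_right, Nat.cast_one, Nat.choose_self]
    rw [← Finset.sum_mul]
    exact le_of_eq (by ring)
  rcases lt_or_ge n k with hnk | hkn
  · -- n < k : empty
    have he : A.powersetCard k = ∅ := Finset.powersetCard_eq_empty.2 (by rw [hA]; exact hnk)
    rw [he, Finset.sum_empty, Nat.choose_eq_zero_of_lt hnk]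
    simp
  · -- main case : 1 ≤ j'+1 < k ≤ n
    obtain ⟨k', rfl⟩ : ∃ k', k = k' + 1 := ⟨k - 1, by omega⟩
    have hjk' : j' + 1 ≤ k' := by omega
    have hn1 : 1 ≤ n := by omega
    set m := n - 1 with hm
    have hmn : m < n := by omega
    have hnm : n = m + 1 := by omega
    have hApos : 0 < A.card := by omega
    obtain ⟨x, hx⟩ := Finset.card_pos.1 hApos
    set B := A.erase x with hBdef
    have hxB : x ∉ B := by rw [hBdef]; exact Finset.notMem_erase x A
    have hAB : A = insert x B := by rw [hBdef]; exact (Finset.insert_erase hx).symm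
    have hB : B.card = m := by rw [hBdef, Finset.card_erase_of_mem hx, hA]
    have hBA : B ⊆ A := by rw [hBdef]; exact Finset.erase_subset x A
    have hrr2 : k' - j' = (k' - (j' + 1)) + 1 := by omega
    simp only [Nat.succ_sub_succ_eq_sub] at hh ⊢
    -- split of the inner convolution over J' not containing x
    have psplit : ∀ J' ∈ B.powersetCard k',
        (∑ I ∈ (insert x J').powersetCard (j' + 1), g I * h (insert x J' \ I))
          = (∑ I ∈ J'.powersetCard (j' + 1), g I * h (insert x (J' \ I)))
            + ∑ I ∈ J'.powersetCard j', g (insert x I) * h (J' \ I) := by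
      intro J' hJ'
      have hxJ : x ∉ J' := fun hc => hxB ((Finset.mem_powersetCard.1 hJ').1 hc)
      rw [sum_powersetCard_insert hxJ j' (fun I => g I * h (insert x J' \ I))]
      congr 1
      · exact Finset.sum_congr rfl (fun I hI => by
          have hxI : x ∉ I := fun hc => hxJ ((Finset.mem_powersetCard.1 hI).1 hc)
          rw [Finset.insert_sdiff_of_notMem _ hxI])
      · exact Finset.sum_congr rfl (fun I hI => by
          have hxJI : x ∉ J' \ I := fun hc => hxJ (Finset.mem_sdiff.1 hc).1
          rw [Finset.insert_sdiff_insert, Finset.sdiff_insert,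
            Finset.erase_eq_of_notMem hxJI])
    -- nonnegativity of the two partial convolutions
    have hq0nn : ∀ J' ∈ B.powersetCard k',
        0 ≤ ∑ I ∈ J'.powersetCard (j' + 1), g I * h (insert x (J' \ I)) := by
      intro J' hJ'
      obtain ⟨hJ'B, hJ'c⟩ := Finset.mem_powersetCard.1 hJ'
      refine Finset.sum_nonneg fun I hI => ?_
      obtain ⟨hIJ, hIc⟩ := Finset.mem_powersetCard.1 hI
      refine mul_nonneg (hg I (Finset.mem_powersetCard.2 ⟨hIJ.trans (hJ'B.trans hBA), hIc⟩))
        (hh _ (Finset.mem_powersetCard.2 ⟨?_, ?_⟩))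
      · exact Finset.insert_subset hx (Finset.sdiff_subset.trans (hJ'B.trans hBA))
      · have hxJI : x ∉ J' \ I := fun hc => hxB (hJ'B (Finset.mem_sdiff.1 hc).1)
        rw [Finset.card_insert_of_notMem hxJI, Finset.card_sdiff_of_subset hIJ, hJ'c, hIc]
        omega
    have hq1nn : ∀ J' ∈ B.powersetCard k',
        0 ≤ ∑ I ∈ J'.powersetCard j', g (insert x I) * h (J' \ I) := by
      intro J' hJ'
      obtain ⟨hJ'B, hJ'c⟩ := Finset.mem_powersetCard.1 hJ'
      refine Finset.sum_nonneg fun I hI => ?_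
      obtain ⟨hIJ, hIc⟩ := Finset.mem_powersetCard.1 hI
      have hxI : x ∉ I := fun hc => hxB (hJ'B (hIJ hc))
      refine mul_nonneg (hg _ (Finset.mem_powersetCard.2 ⟨?_, ?_⟩))
        (hh _ (Finset.mem_powersetCard.2 ⟨Finset.sdiff_subset.trans (hJ'B.trans hBA), ?_⟩))
      · exact Finset.insert_subset hx (hIJ.trans (hJ'B.trans hBA))
      · rw [Finset.card_insert_of_notMem hxI, hIc]
      · rw [Finset.card_sdiff_of_subset hIJ, hJ'c, hIc]
    -- rewriting the three sums over A
    have eG : (∑ I ∈ (insert x B).powersetCard (j' + 1), g I ^ 2)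
        = (∑ I ∈ B.powersetCard (j' + 1), g I ^ 2)
          + ∑ I ∈ B.powersetCard j', g (insert x I) ^ 2 :=
      sum_powersetCard_insert hxB j' (fun S => g S ^ 2)
    have eH : (∑ K ∈ (insert x B).powersetCard (k' - j'), h K ^ 2)
        = (∑ K ∈ B.powersetCard (k' - j'), h K ^ 2)
          + ∑ K ∈ B.powersetCard (k' - (j' + 1)), h (insert x K) ^ 2 := by
      rw [hrr2]
      exact sum_powersetCard_insert hxB _ (fun S => h S ^ 2)
    have eJ : (∑ J ∈ (insert x B).powersetCard (k' + 1),
          (∑ I ∈ J.powersetCard (j' + 1), g I * h (J \ I)) ^ 2)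
        = (∑ J ∈ B.powersetCard (k' + 1),
            (∑ I ∈ J.powersetCard (j' + 1), g I * h (J \ I)) ^ 2)
          + ∑ J' ∈ B.powersetCard k',
              (∑ I ∈ (insert x J').powersetCard (j' + 1), g I * h (insert x J' \ I)) ^ 2 :=
      sum_powersetCard_insert hxB k'
        (fun J => (∑ I ∈ J.powersetCard (j' + 1), g I * h (J \ I)) ^ 2)
    have eSplit : (∑ J' ∈ B.powersetCard k',
          (∑ I ∈ (insert x J').powersetCard (j' + 1), g I * h (insert x J' \ I)) ^ 2)
        = ((∑ J' ∈ B.powersetCard k',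
              (∑ I ∈ J'.powersetCard (j' + 1), g I * h (insert x (J' \ I))) ^ 2)
            + ∑ J' ∈ B.powersetCard k',
                (∑ I ∈ J'.powersetCard j', g (insert x I) * h (J' \ I)) ^ 2)
          + 2 * ∑ J' ∈ B.powersetCard k',
              (∑ I ∈ J'.powersetCard (j' + 1), g I * h (insert x (J' \ I)))
              * (∑ I ∈ J'.powersetCard j', g (insert x I) * h (J' \ I)) := by
      rw [Finset.mul_sum, ← Finset.sum_add_distrib, ← Finset.sum_add_distrib]
      exact Finset.sum_congr rfl (fun J' hJ' => by rw [psplit J' hJ']; ring)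
    -- the three induction hypotheses
    have hh' : ∀ K ∈ B.powersetCard (k' + 1 - (j' + 1)), 0 ≤ h K := by
      simp only [Nat.succ_sub_succ_eq_sub]
      exact fun K hK => hh K (Finset.powersetCard_mono hBA hK)
    have IH1 := ih m hmn B hB (j' + 1) (k' + 1) g h
      (fun I hI => hg I (Finset.powersetCard_mono hBA hI)) hh'
    simp only [Nat.succ_sub_succ_eq_sub] at IH1
    have IH2 := ih m hmn B hB j' k' (fun S => g (insert x S)) h
      (fun I hI => by
        obtain ⟨hIB, hIc⟩ := Finset.mem_powersetCard.1 hI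
        have hxI : x ∉ I := fun hc => hxB (hIB hc)
        exact hg _ (Finset.mem_powersetCard.2 ⟨Finset.insert_subset hx (hIB.trans hBA),
          by rw [Finset.card_insert_of_notMem hxI, hIc]⟩))
      (fun K hK => hh K (Finset.powersetCard_mono hBA hK))
    have IH3 := ih m hmn B hB (j' + 1) k' g (fun S => h (insert x S))
      (fun I hI => hg I (Finset.powersetCard_mono hBA hI))
      (fun K hK => by
        obtain ⟨hKB, hKc⟩ := Finset.mem_powersetCard.1 hK
        have hxK : x ∉ K := fun hc => hxB (hKB hc)
        exact hh _ (Finset.mem_powersetCard.2 ⟨Finset.insert_subset hx (hKB.trans hBA),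
          by rw [Finset.card_insert_of_notMem hxK, hKc]; omega⟩))
    -- Cauchy-Schwarz for the cross term
    have hCS : (∑ J' ∈ B.powersetCard k',
          (∑ I ∈ J'.powersetCard (j' + 1), g I * h (insert x (J' \ I)))
          * (∑ I ∈ J'.powersetCard j', g (insert x I) * h (J' \ I))) ^ 2
        ≤ (∑ J' ∈ B.powersetCard k',
              (∑ I ∈ J'.powersetCard (j' + 1), g I * h (insert x (J' \ I))) ^ 2)
          * ∑ J' ∈ B.powersetCard k',
              (∑ I ∈ J'.powersetCard j', g (insert x I) * h (J' \ I)) ^ 2 :=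
      Finset.sum_mul_sq_le_sq_mul_sq (B.powersetCard k')
        (fun J' => ∑ I ∈ J'.powersetCard (j' + 1), g I * h (insert x (J' \ I)))
        (fun J' => ∑ I ∈ J'.powersetCard j', g (insert x I) * h (J' \ I))
    have hX0 : 0 ≤ ∑ J' ∈ B.powersetCard k',
        (∑ I ∈ J'.powersetCard (j' + 1), g I * h (insert x (J' \ I)))
        * (∑ I ∈ J'.powersetCard j', g (insert x I) * h (J' \ I)) :=
      Finset.sum_nonneg fun J' hJ' => mul_nonneg (hq0nn J' hJ') (hq1nn J' hJ')
    -- rewrite the goal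
    rw [hAB, eG, eH, eJ, eSplit]
    -- abbreviate the sums
    set S00 := ∑ J ∈ B.powersetCard (k' + 1),
      (∑ I ∈ J.powersetCard (j' + 1), g I * h (J \ I)) ^ 2 with hS00def
    set Qs := ∑ J' ∈ B.powersetCard k',
      (∑ I ∈ J'.powersetCard (j' + 1), g I * h (insert x (J' \ I))) ^ 2 with hQsdef
    set Ps := ∑ J' ∈ B.powersetCard k',
      (∑ I ∈ J'.powersetCard j', g (insert x I) * h (J' \ I)) ^ 2 with hPsdef
    set Xs := ∑ J' ∈ B.powersetCard k',
      (∑ I ∈ J'.powersetCard (j' + 1), g I * h (insert x (J' \ I)))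
      * (∑ I ∈ J'.powersetCard j', g (insert x I) * h (J' \ I)) with hXsdef
    set G0 := ∑ I ∈ B.powersetCard (j' + 1), g I ^ 2 with hG0def
    set G1 := ∑ I ∈ B.powersetCard j', g (insert x I) ^ 2 with hG1def
    set H0 := ∑ K ∈ B.powersetCard (k' - j'), h K ^ 2 with hH0def
    set H1 := ∑ K ∈ B.powersetCard (k' - (j' + 1)), h (insert x K) ^ 2 with hH1def
    -- the numeric identities
    have npa : n.choose (j' + 1) = m.choose (j' + 1) + m.choose j' := by
      rw [hnm, Nat.choose_succ_succ', Nat.add_comm]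
    have npb : n.choose (k' - j') = m.choose (k' - j') + m.choose (k' - (j' + 1)) := by
      rw [hnm, hrr2, Nat.choose_succ_succ', Nat.add_comm]
    have npc : n.choose (k' + 1) = m.choose (k' + 1) + m.choose k' := by
      rw [hnm, Nat.choose_succ_succ', Nat.add_comm]
    have npd : (k' + 1).choose (j' + 1) = k'.choose (j' + 1) + k'.choose j' := by
      rw [Nat.choose_succ_succ', Nat.add_comm]
    have sm1 := Nat.add_one_mul_choose_eq m j'
    have sm2 := Nat.add_one_mul_choose_eq m (k' - (j' + 1))
    have sm3 := Nat.add_one_mul_choose_eq m k'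
    have sm4 := Nat.add_one_mul_choose_eq k' j'
    have nra : n * m.choose j' = (j' + 1) * n.choose (j' + 1) := by
      rw [hnm, sm1, Nat.mul_comm]
    have nrb : n * m.choose (k' - (j' + 1)) = (k' - j') * n.choose (k' - j') := by
      rw [hnm, hrr2, sm2, Nat.mul_comm]
    have nrc : n * m.choose k' = (k' + 1) * n.choose (k' + 1) := by
      rw [hnm, sm3, Nat.mul_comm]
    have nrd : (k' + 1) * k'.choose j' = (j' + 1) * (k' + 1).choose (j' + 1) := by
      rw [sm4, Nat.mul_comm]
    have hcast : ((k' - j' : ℕ) : ℝ) = ((k' + 1 : ℕ) : ℝ) - ((j' + 1 : ℕ) : ℝ) := by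
      have hj'k' : j' ≤ k' := by omega
      push_cast [hj'k']
      ring
    -- apply the key arithmetic lemma
    have KEY := key_arith (n : ℝ) ((j' + 1 : ℕ) : ℝ) ((k' + 1 : ℕ) : ℝ)
      (m.choose (j' + 1) : ℝ) (m.choose j' : ℝ)
      (m.choose (k' - j') : ℝ) (m.choose (k' - (j' + 1)) : ℝ)
      (m.choose (k' + 1) : ℝ) (m.choose k' : ℝ)
      (k'.choose (j' + 1) : ℝ) (k'.choose j' : ℝ)
      (n.choose (j' + 1) : ℝ) (n.choose (k' - j') : ℝ)
      (n.choose (k' + 1) : ℝ) ((k' + 1).choose (j' + 1) : ℝ)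
      S00 Ps Qs Xs G0 G1 H0 H1
      (by exact_mod_cast Nat.succ_pos j')
      (by exact_mod_cast (by omega : j' + 1 < k' + 1))
      (by exact_mod_cast hkn)
      (by exact_mod_cast Nat.choose_pos (by omega : j' ≤ m))
      (by exact_mod_cast Nat.choose_pos (by omega : k' - j' ≤ m))
      (by exact_mod_cast Nat.choose_pos (by omega : k' - (j' + 1) ≤ m))
      (by exact_mod_cast Nat.choose_pos (by omega : k' ≤ m))
      (by exact_mod_cast Nat.choose_pos (by omega : j' + 1 ≤ k'))
      (by exact_mod_cast Nat.choose_pos (by omega : j' ≤ k'))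
      (by exact_mod_cast Nat.choose_pos (by omega : j' + 1 ≤ m))
      (by positivity)
      (by exact_mod_cast npa) (by exact_mod_cast npb) (by exact_mod_cast npc)
      (by exact_mod_cast npd)
      (by exact_mod_cast nra)
      (by rw [← hcast]; exact_mod_cast nrb)
      (by exact_mod_cast nrc) (by exact_mod_cast nrd)
      (Finset.sum_nonneg fun _ _ => sq_nonneg _)
      (Finset.sum_nonneg fun _ _ => sq_nonneg _)
      (Finset.sum_nonneg fun _ _ => sq_nonneg _)
      hX0
      (hCS.trans_eq (mul_comm _ _))
      (Finset.sum_nonneg fun _ _ => sq_nonneg _)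
      (Finset.sum_nonneg fun _ _ => sq_nonneg _)
      (Finset.sum_nonneg fun _ _ => sq_nonneg _)
      (Finset.sum_nonneg fun _ _ => sq_nonneg _)
      IH1 IH2 IH3
    linarith [KEY]

theorem subset_convolution_inequality {α : Type*} [DecidableEq α]
    (A : Finset α) (n j k : ℕ) (hA : A.card = n) (hjk : j ≤ k) (hkn : k ≤ n)
    (g h : Finset α → ℝ)
    (hg : ∀ I ∈ Finset.powersetCard j A, 0 ≤ g I)
    (hh : ∀ J ∈ Finset.powersetCard (k - j) A, 0 ≤ h J) :
    (1 / (n.choose k) : ℝ) *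
        ∑ J ∈ Finset.powersetCard k A,
          ((∑ I ∈ Finset.powersetCard j J, g I * h (J \ I)) / (k.choose j)) ^ 2
      ≤ ((1 / (n.choose j) : ℝ) * ∑ I ∈ Finset.powersetCard j A, g I ^ 2) *
        ((1 / (n.choose (k - j)) : ℝ) * ∑ J ∈ Finset.powersetCard (k - j) A, h J ^ 2) := by
  have M := main_ineq n A hA j k g h hg hh
  have hc : (0:ℝ) < n.choose k := by exact_mod_cast Nat.choose_pos hkn
  have hd : (0:ℝ) < k.choose j := by exact_mod_cast Nat.choose_pos hjk
  have ha : (0:ℝ) < n.choose j := by exact_mod_cast Nat.choose_pos (hjk.trans hkn)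
  have hb : (0:ℝ) < n.choose (k - j) := by
    exact_mod_cast Nat.choose_pos (by omega : k - j ≤ n)
  simp only [div_pow, ← Finset.sum_div]
  rw [show (1 / (n.choose k : ℝ)) *
      ((∑ J ∈ Finset.powersetCard k A,
        (∑ I ∈ Finset.powersetCard j J, g I * h (J \ I)) ^ 2) / (k.choose j : ℝ) ^ 2)
      = (∑ J ∈ Finset.powersetCard k A,
        (∑ I ∈ Finset.powersetCard j J, g I * h (J \ I)) ^ 2)
        / ((n.choose k : ℝ) * (k.choose j : ℝ) ^ 2) from by ring]
  rw [show ((1 / (n.choose j : ℝ)) * ∑ I ∈ Finset.powersetCard j A, g I ^ 2) *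
      ((1 / (n.choose (k - j) : ℝ)) * ∑ J ∈ Finset.powersetCard (k - j) A, h J ^ 2)
      = ((∑ I ∈ Finset.powersetCard j A, g I ^ 2) *
          ∑ J ∈ Finset.powersetCard (k - j) A, h J ^ 2)
        / ((n.choose j : ℝ) * (n.choose (k - j) : ℝ)) from by ring]
  rw [div_le_div_iff₀ (by positivity) (by positivity)]
  nlinarith [M]
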